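/- Let 𝔤 be the 4-dimensional Lie algebra with orthonormal basis {X,Y,Z,W}, brackets as in the minimal conformal foliation normal form ([W,Z]=λW, [Z,X]=αX+βY+z₁Z+w₁W, [Z,Y]=−βX+αY+z₂Z+w₂W, [W,X]=aX+bY+z₃Z−z₁W, [W,Y]=−bX+aY+z₄Z−z₂W, [Y,X]=rX+θ₁Z+θ₂W), J with JX=Y, JY=−X, JZ=W, JW=−Z, and Kähler form ω(U,V)=g(JU,V). Then dω(X,Y,Z) = −θ₂ − 2α, dω(X,Y,W) = θ₁ − 2a, dω(X,Z,W) = 0 and dω(Y,Z,W) = 0, where dω(U,V,T) = −g(J[U,V],T) − g(J[V,T],U) − g(J[T,U],V). Hence dω = 0 if and only if θ₁ = 2a and θ₂ = −2α. -/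

import Mathlib

set_option maxHeartbeats 2000000


/-- For the 4-dimensional Lie algebra normal form with orthonormal basis
`{X,Y,Z,W}`, bracket relations as listed, `J` with `JX=Y, JY=−X, JZ=W, JW=−Z` and
Kähler form `ω(U,V)=g(JU,V)`, the exterior derivative
`dω(U,V,T) = −g(J[U,V],T) − g(J[V,T],U) − g(J[T,U],V)` satisfies
`dω(X,Y,Z) = −θ₂−2α`, `dω(X,Y,W) = θ₁−2a`, `dω(X,Z,W) = 0`, `dω(Y,Z,W) = 0`;
hence `dω = 0` iff `θ₁ = 2a` and `θ₂ = −2α`. -/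
theorem domega_formulas
    {V : Type*} [NormedAddCommGroup V] [InnerProductSpace ℝ V] [FiniteDimensional ℝ V]
    (e : OrthonormalBasis (Fin 4) ℝ V)
    (X Y Z W : V) (hX : X = e 0) (hY : Y = e 1) (hZ : Z = e 2) (hW : W = e 3)
    (lam alpha beta a b r z1 z2 z3 z4 w1 w2 th1 th2 : ℝ)
    (lb : V →ₗ[ℝ] V →ₗ[ℝ] V)
    (hskew : ∀ U U' : V, lb U U' = - lb U' U)
    (hWZ : lb W Z = lam • W)
    (hZX : lb Z X = alpha • X + beta • Y + z1 • Z + w1 • W)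
    (hZY : lb Z Y = -beta • X + alpha • Y + z2 • Z + w2 • W)
    (hWX : lb W X = a • X + b • Y + z3 • Z + (-z1) • W)
    (hWY : lb W Y = -b • X + a • Y + z4 • Z + (-z2) • W)
    (hYX : lb Y X = r • X + th1 • Z + th2 • W)
    (J : V →ₗ[ℝ] V)
    (hJX : J X = Y) (hJY : J Y = -X) (hJZ : J Z = W) (hJW : J W = -Z)
    (domega : V → V → V → ℝ)
    (hdomega : ∀ U U' T : V, domega U U' T =
      -(inner ℝ (J (lb U U')) T : ℝ) - inner ℝ (J (lb U' T)) U - inner ℝ (J (lb T U)) U') :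
    domega X Y Z = -th2 - 2 * alpha ∧
    domega X Y W = th1 - 2 * a ∧
    domega X Z W = 0 ∧
    domega Y Z W = 0 ∧
    ((∀ U U' T : V, domega U U' T = 0) ↔ (th1 = 2 * a ∧ th2 = -2 * alpha)) := by
  subst hX hY hZ hW
  have key : ∀ i j : Fin 4, (inner ℝ (e i) (e j) : ℝ) = if i = j then 1 else 0 :=
    fun i j => orthonormal_iff_ite.mp e.orthonormal i j
  have hzero : ∀ u : V, lb u u = 0 := by
    intro u
    have h := hskew u u
    have h2 : (2:ℝ) • lb u u = 0 := by
      rw [two_smul]; nth_rewrite 1 [h]; exact neg_add_cancel _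
    rcases smul_eq_zero.mp h2 with h' | h'
    · norm_num at h'
    · exact h'
  have hZW : lb (e 2) (e 3) = -(lam • e 3) := by rw [hskew, hWZ]
  have hXZ : lb (e 0) (e 2) = -(alpha • e 0 + beta • e 1 + z1 • e 2 + w1 • e 3) := by
    rw [hskew, hZX]
  have hYZ : lb (e 1) (e 2) = -(-beta • e 0 + alpha • e 1 + z2 • e 2 + w2 • e 3) := by
    rw [hskew, hZY]
  have hXW : lb (e 0) (e 3) = -(a • e 0 + b • e 1 + z3 • e 2 + (-z1) • e 3) := by
    rw [hskew, hWX]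
  have hYW : lb (e 1) (e 3) = -(-b • e 0 + a • e 1 + z4 • e 2 + (-z2) • e 3) := by
    rw [hskew, hWY]
  have hXY : lb (e 0) (e 1) = -(r • e 0 + th1 • e 2 + th2 • e 3) := by rw [hskew, hYX]
  have h1 : domega (e 0) (e 1) (e 2) = -th2 - 2 * alpha := by
    rw [hdomega]
    simp [hXY, hYZ, hZX, hJX, hJY, hJZ, hJW, inner_add_left, inner_add_right,
      real_inner_smul_left, real_inner_smul_right, inner_neg_left, inner_neg_right, key]
    ring
  have h2 : domega (e 0) (e 1) (e 3) = th1 - 2 * a := by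
    rw [hdomega]
    simp [hXY, hYW, hWX, hJX, hJY, hJZ, hJW, inner_add_left, inner_add_right,
      real_inner_smul_left, real_inner_smul_right, inner_neg_left, inner_neg_right, key]
    ring
  have h3 : domega (e 0) (e 2) (e 3) = 0 := by
    rw [hdomega]
    simp [hXZ, hZW, hWX, hJX, hJY, hJZ, hJW, inner_add_left, inner_add_right,
      real_inner_smul_left, real_inner_smul_right, inner_neg_left, inner_neg_right, key]
  have h4 : domega (e 1) (e 2) (e 3) = 0 := by
    rw [hdomega]
    simp [hYZ, hZW, hWY, hJX, hJY, hJZ, hJW, inner_add_left, inner_add_right,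
      real_inner_smul_left, real_inner_smul_right, inner_neg_left, inner_neg_right, key]
  refine ⟨h1, h2, h3, h4, ?_, ?_⟩
  · intro hall
    constructor
    · have := hall (e 0) (e 1) (e 3); rw [h2] at this; linarith
    · have := hall (e 0) (e 1) (e 2); rw [h1] at this; linarith
  · rintro ⟨ha1, ha2⟩ U U' T
    subst ha1 ha2
    have hUe := e.sum_repr U
    have hU'e := e.sum_repr U'
    have hTe := e.sum_repr T
    rw [Fin.sum_univ_four] at hUe hU'e hTe
    generalize e.repr U 0 = u0 at hUe
    generalize e.repr U 1 = u1 at hUe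
    generalize e.repr U 2 = u2 at hUe
    generalize e.repr U 3 = u3 at hUe
    generalize e.repr U' 0 = v0 at hU'e
    generalize e.repr U' 1 = v1 at hU'e
    generalize e.repr U' 2 = v2 at hU'e
    generalize e.repr U' 3 = v3 at hU'e
    generalize e.repr T 0 = t0 at hTe
    generalize e.repr T 1 = t1 at hTe
    generalize e.repr T 2 = t2 at hTe
    generalize e.repr T 3 = t3 at hTe
    rw [hdomega, ← hUe, ← hU'e, ← hTe]
    simp only [map_add, map_smul, map_neg, LinearMap.add_apply, LinearMap.smul_apply,
      LinearMap.neg_apply, smul_add, smul_neg, smul_smul]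
    simp only [hzero, hXY, hXZ, hXW, hYX, hYZ, hYW, hZX, hZY, hZW, hWX, hWY, hWZ]
    simp only [map_add, map_smul, map_neg, map_zero, smul_add, smul_neg, smul_smul,
      smul_zero, hJX, hJY, hJZ, hJW]
    simp only [inner_add_left, inner_add_right, real_inner_smul_left, real_inner_smul_right,
      inner_neg_left, inner_neg_right, inner_zero_left, inner_zero_right, key]
    simp only [Fin.reduceEq, reduceIte, ite_true, ite_false, if_true, if_false]
    ring
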